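/- arXiv:2310.15358 — 2 statements merged into one kernel-verified Lean document; each statement's English description precedes it below -/
import Mathlib

section
/- The function f is convex on the interval [0, 2): for all V₁, V₂ ∈ [0, 2) and all t ∈ [0, 1], f(t·V₁ + (1−t)·V₂) ≤ t·f(V₁) + (1−t)·f(V₂). -/
open Real

/-- First branch of Gupta et al.'s helper function `f`. -/
noncomputable def g1 (V : ℝ) : ℝ := Real.log ((2 + V) / (2 - V)) - 2 * V / (2 + V)

/-- Gupta et al.'s helper function `f`. -/
noncomputable def f (V : ℝ) : ℝ := max (g1 V) (V ^ 2 / 2 + V ^ 4 / 36 + V ^ 6 / 288)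

noncomputable def g1d (x : ℝ) : ℝ := 4 / ((2 - x) * (2 + x)) - 4 / (2 + x) ^ 2

noncomputable def g1dd (x : ℝ) : ℝ :=
  8 * x / ((2 - x) * (2 + x)) ^ 2 + 8 / (2 + x) ^ 3

lemma hasDerivAt_g1 {x : ℝ} (h1 : -2 < x) (h2 : x < 2) : HasDerivAt g1 (g1d x) x := by
  have hp : (0:ℝ) < 2 + x := by linarith
  have hm : (0:ℝ) < 2 - x := by linarith
  have hq := ((hasDerivAt_const x 2).add (hasDerivAt_id' x)).div
      ((hasDerivAt_const x 2).sub (hasDerivAt_id' x)) hm.ne'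
  have hlog := hq.log (div_pos hp hm).ne'
  have hfr := ((hasDerivAt_id' x).const_mul 2).div
      ((hasDerivAt_const x 2).add (hasDerivAt_id' x)) hp.ne'
  have := hlog.sub hfr
  refine this.congr_deriv ?_
  unfold g1d
  norm_num only [Pi.add_apply, Pi.sub_apply, Pi.mul_apply, Pi.div_apply, Pi.pow_apply]
  field_simp
  ring

lemma hasDerivAt_g1d {x : ℝ} (h1 : -2 < x) (h2 : x < 2) : HasDerivAt g1d (g1dd x) x := by
  have hp : (0:ℝ) < 2 + x := by linarith
  have hm : (0:ℝ) < 2 - x := by linarith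
  have hu := ((hasDerivAt_const x 2).sub (hasDerivAt_id' x)).mul
      ((hasDerivAt_const x 2).add (hasDerivAt_id' x))
  have h1' := (hasDerivAt_const x 4).div hu (mul_pos hm hp).ne'
  have hv := ((hasDerivAt_const x 2).add (hasDerivAt_id' x)).pow 2
  have h2' := (hasDerivAt_const x 4).div hv (pow_pos hp 2).ne'
  have := h1'.sub h2'
  refine this.congr_deriv ?_
  unfold g1dd
  norm_num only [Pi.add_apply, Pi.sub_apply, Pi.mul_apply, Pi.div_apply, Pi.pow_apply]
  field_simp
  ring

lemma g1_convex : ConvexOn ℝ (Set.Ico (0:ℝ) 2) g1 := by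
  have hint : interior (Set.Ico (0:ℝ) 2) = Set.Ioo 0 2 := interior_Ico
  refine convexOn_of_hasDerivWithinAt2_nonneg (convex_Ico 0 2) ?_
    (f' := g1d) (f'' := g1dd) ?_ ?_ ?_
  · intro x hx
    exact (hasDerivAt_g1 (by linarith [hx.1]) hx.2).continuousAt.continuousWithinAt
  · intro x hx
    rw [hint] at hx
    exact (hasDerivAt_g1 (by linarith [hx.1]) hx.2).hasDerivWithinAt
  · intro x hx
    rw [hint] at hx
    exact (hasDerivAt_g1d (by linarith [hx.1]) hx.2).hasDerivWithinAt
  · intro x hx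
    rw [hint] at hx
    obtain ⟨hx0, hx2⟩ := hx
    have hp : (0:ℝ) < 2 + x := by linarith
    have hm : (0:ℝ) < 2 - x := by linarith
    unfold g1dd
    have h1 : 0 ≤ 8 * x / ((2 - x) * (2 + x)) ^ 2 := by positivity
    have h2 : 0 ≤ 8 / (2 + x) ^ 3 := by positivity
    linarith

lemma poly_convex : ConvexOn ℝ (Set.Ico (0:ℝ) 2)
    (fun V : ℝ => V ^ 2 / 2 + V ^ 4 / 36 + V ^ 6 / 288) := by
  have h2 : ConvexOn ℝ Set.univ fun x : ℝ => x ^ 2 := Even.convexOn_pow ⟨1, rfl⟩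
  have h4 : ConvexOn ℝ Set.univ fun x : ℝ => x ^ 4 := Even.convexOn_pow ⟨2, rfl⟩
  have h6 : ConvexOn ℝ Set.univ fun x : ℝ => x ^ 6 := Even.convexOn_pow ⟨3, rfl⟩
  have := ((h2.smul (by norm_num : (0:ℝ) ≤ 1/2)).add
    ((h4.smul (by norm_num : (0:ℝ) ≤ 1/36)).add
      (h6.smul (by norm_num : (0:ℝ) ≤ 1/288)))).subset
    (Set.subset_univ _) (convex_Ico 0 2)
  refine this.congr ?_
  intro x _
  simp [smul_eq_mul]
  ring

lemma f_convex : ConvexOn ℝ (Set.Ico (0:ℝ) 2) f := by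
  have := g1_convex.sup poly_convex
  convert this using 1
  all_goals rfl

/-- `f` is convex on `[0, 2)`. -/
theorem f_convexOn :
    ∀ V₁ V₂ : ℝ, 0 ≤ V₁ → V₁ < 2 → 0 ≤ V₂ → V₂ < 2 →
      ∀ t : ℝ, 0 ≤ t → t ≤ 1 →
        f (t * V₁ + (1 - t) * V₂) ≤ t * f V₁ + (1 - t) * f V₂ := by
  intro V₁ V₂ h1 h2 h3 h4 t ht0 ht1
  have hb : (0:ℝ) ≤ 1 - t := by linarith
  have hab : t + (1 - t) = 1 := by ring
  have := f_convex.2 ⟨h1, h2⟩ ⟨h3, h4⟩ ht0 hb hab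
  simpa [smul_eq_mul] using this
end

section
/- For every π ∈ (0, 1) and all Δ, ε ∈ [0, 1], one has ψ_π(Δ) ≤ ψ_π(ε) if and only if Δ ≤ ε. -/
open Real

/-- Gupta et al.'s bound `ψ` for a binary sensitive attribute with `ℙ(S = 1) = p`. -/
noncomputable def psi (p Δ : ℝ) : ℝ := (1 - p) * f (p * Δ) + p * f ((1 - p) * Δ)

lemma g1_hasDerivAt {x : ℝ} (hx1 : x < 2) (hx2 : -2 < x) :
    HasDerivAt g1 (8 * x / ((2 - x) * (2 + x) ^ 2)) x := by
  have h2p : (0:ℝ) < 2 + x := by linarith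
  have h2m : (0:ℝ) < 2 - x := by linarith
  have hc : HasDerivAt (fun y : ℝ => 2 + y) 1 x := (hasDerivAt_id x).const_add 2
  have hd : HasDerivAt (fun y : ℝ => 2 - y) (-1) x := by
    simpa using (hasDerivAt_id x).const_sub 2
  have hq : HasDerivAt (fun y : ℝ => (2 + y) / (2 - y))
      ((1 * (2 - x) - (2 + x) * (-1)) / (2 - x) ^ 2) x := hc.div hd h2m.ne'
  have hqx : (2 + x) / (2 - x) ≠ 0 := by positivity
  have hlog := hq.log hqx
  have hn : HasDerivAt (fun y : ℝ => 2 * y) 2 x := by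
    simpa using (hasDerivAt_id x).const_mul 2
  have hr : HasDerivAt (fun y : ℝ => 2 * y / (2 + y))
      ((2 * (2 + x) - 2 * x * 1) / (2 + x) ^ 2) x := hn.div hc h2p.ne'
  have := hlog.sub hr
  refine this.congr_deriv ?_
  field_simp
  ring

lemma g1_strictMonoOn : StrictMonoOn g1 (Set.Icc (0:ℝ) 1) := by
  have key : ∀ x ∈ Set.Icc (0:ℝ) 1, (0:ℝ) < 2 + x ∧ (0:ℝ) < 2 - x := by
    intro x hx; simp only [Set.mem_Icc] at hx; constructor <;> linarith [hx.1, hx.2]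
  apply strictMonoOn_of_deriv_pos (convex_Icc 0 1)
  · apply ContinuousOn.sub
    · apply ContinuousOn.log
      · exact ContinuousOn.div (by fun_prop) (by fun_prop)
          (fun x hx => (key x hx).2.ne')
      · intro x hx
        exact (div_pos (key x hx).1 (key x hx).2).ne'
    · exact ContinuousOn.div (by fun_prop) (by fun_prop) (fun x hx => (key x hx).1.ne')
  · intro x hx
    rw [interior_Icc, Set.mem_Ioo] at hx
    rw [(g1_hasDerivAt (by linarith [hx.2]) (by linarith [hx.1])).deriv]
    have h1 : (0:ℝ) < 2 - x := by linarith [hx.2]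
    have h2 : (0:ℝ) < 2 + x := by linarith [hx.1]
    exact div_pos (by linarith [hx.1]) (mul_pos h1 (pow_pos h2 2))

lemma poly_strictMonoOn :
    StrictMonoOn (fun V : ℝ => V ^ 2 / 2 + V ^ 4 / 36 + V ^ 6 / 288) (Set.Icc (0:ℝ) 1) := by
  intro a ha b hb hab
  simp only [Set.mem_Icc] at ha hb
  have h2 : a ^ 2 < b ^ 2 := by nlinarith [ha.1]
  have h4 : a ^ 4 ≤ b ^ 4 := by nlinarith [sq_nonneg a, sq_nonneg b]
  have h6 : a ^ 6 ≤ b ^ 6 := by nlinarith [sq_nonneg a, sq_nonneg b, sq_nonneg (a*b), pow_nonneg ha.1 4, pow_nonneg hb.1 4]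
  dsimp only
  linarith

lemma f_strictMonoOn : StrictMonoOn f (Set.Icc (0:ℝ) 1) := by
  intro a ha b hb hab
  exact max_lt_max (g1_strictMonoOn ha hb hab) (poly_strictMonoOn ha hb hab)

/-- for every `p ∈ (0, 1)` and all `Δ, ε ∈ [0, 1]`,
`ψ_p(Δ) ≤ ψ_p(ε)` if and only if `Δ ≤ ε`. -/
theorem psi_le_psi_iff :
    ∀ p : ℝ, 0 < p → p < 1 →
      ∀ Δ ε : ℝ, 0 ≤ Δ → Δ ≤ 1 → 0 ≤ ε → ε ≤ 1 →
        (psi p Δ ≤ psi p ε ↔ Δ ≤ ε) := by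
  intro p hp0 hp1 Δ ε hΔ0 hΔ1 hε0 hε1
  have hmono : StrictMonoOn (psi p) (Set.Icc (0:ℝ) 1) := by
    intro a ha b hb hab
    simp only [Set.mem_Icc] at ha hb
    have hq0 : 0 ≤ 1 - p := by linarith
    have m1 : p * a ∈ Set.Icc (0:ℝ) 1 := by
      constructor
      · exact mul_nonneg (by linarith) (by linarith [ha.1, hb.1])
      · nlinarith [ha.2]
    have m2 : p * b ∈ Set.Icc (0:ℝ) 1 := by
      constructor
      · exact mul_nonneg (by linarith) (by linarith [ha.1, hb.1])
      · nlinarith [hb.2]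
    have m3 : (1 - p) * a ∈ Set.Icc (0:ℝ) 1 := by
      constructor
      · exact mul_nonneg (by linarith) (by linarith [ha.1, hb.1])
      · nlinarith [ha.2]
    have m4 : (1 - p) * b ∈ Set.Icc (0:ℝ) 1 := by
      constructor
      · exact mul_nonneg (by linarith) (by linarith [ha.1, hb.1])
      · nlinarith [hb.2]
    have f1 : f (p * a) < f (p * b) :=
      f_strictMonoOn m1 m2 (by nlinarith)
    have f2 : f ((1 - p) * a) < f ((1 - p) * b) :=
      f_strictMonoOn m3 m4 (by nlinarith)
    unfold psi
    have := mul_lt_mul_of_pos_left f1 (by linarith : (0:ℝ) < 1 - p)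
    have := mul_lt_mul_of_pos_left f2 hp0
    linarith
  exact ⟨fun h => (hmono.le_iff_le ⟨hΔ0, hΔ1⟩ ⟨hε0, hε1⟩).mp h,
    fun h => (hmono.le_iff_le ⟨hΔ0, hΔ1⟩ ⟨hε0, hε1⟩).mpr h⟩
end
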